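/- arXiv:1410.2680 — 3 statements merged into one kernel-verified Lean document; each statement's English description precedes it below -/
import Mathlib

section
/- Let D be a real m×n matrix with rank(D) = n, let b ∈ ℝ^m, and let P = {v ∈ ℝⁿ : D v ≤ b componentwise}. Let c ∈ ℝⁿ and suppose P is nonempty and sup{cᵀv : v ∈ P} is finite. Then there exists an extreme point v* of P (i.e., a point of P that cannot be written as (x + y)/2 with x, y ∈ P and x ≠ y) such that cᵀv* = sup{cᵀv : v ∈ P}. -/
open Matrix Module

variable {m n : ℕ}

noncomputable def polyK (D : Matrix (Fin m) (Fin n) ℝ) (b : Fin m → ℝ)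
    (v : Fin n → ℝ) : Submodule ℝ (Fin n → ℝ) :=
  ⨅ i ∈ {i | D.mulVec v i = b i}, LinearMap.ker ((LinearMap.proj i).comp D.mulVecLin)

lemma mem_polyK {D : Matrix (Fin m) (Fin n) ℝ} {b : Fin m → ℝ} {v d : Fin n → ℝ} :
    d ∈ polyK D b v ↔ ∀ i, D.mulVec v i = b i → D.mulVec d i = 0 := by
  simp [polyK, Submodule.mem_iInf, LinearMap.mem_ker]

lemma poly_step {D : Matrix (Fin m) (Fin n) ℝ} {b : Fin m → ℝ} {c : Fin n → ℝ}
    {v : Fin n → ℝ} (hv : ∀ i, D.mulVec v i ≤ b i)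
    {e : Fin n → ℝ} (he : e ∈ polyK D b v) (hex : ∃ i, 0 < D.mulVec e i)
    (hc : 0 ≤ c ⬝ᵥ e) :
    ∃ w, (∀ i, D.mulVec w i ≤ b i) ∧ polyK D b w < polyK D b v ∧ c ⬝ᵥ v ≤ c ⬝ᵥ w := by
  classical
  set T : Finset (Fin m) := Finset.univ.filter (fun i => 0 < D.mulVec e i) with hT
  have hTne : T.Nonempty := by
    obtain ⟨i, hi⟩ := hex
    exact ⟨i, by simp [hT, hi]⟩
  set f : Fin m → ℝ := fun i => (b i - D.mulVec v i) / (D.mulVec e i) with hf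
  set t : ℝ := T.inf' hTne f with ht
  have ht0 : 0 ≤ t := by
    apply Finset.le_inf'
    intro i hi
    have hpos : 0 < D.mulVec e i := by simpa [hT] using hi
    exact div_nonneg (by linarith [hv i]) hpos.le
  obtain ⟨i₀, hi₀T, hi₀⟩ := T.exists_mem_eq_inf' hTne f
  have hi₀pos : 0 < D.mulVec e i₀ := by simpa [hT] using hi₀T
  set w : Fin n → ℝ := v + t • e with hw
  have hmul : ∀ i, D.mulVec w i = D.mulVec v i + t * D.mulVec e i := by
    intro i
    simp [hw, Matrix.mulVec_add, Matrix.mulVec_smul]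
  have hfeas : ∀ i, D.mulVec w i ≤ b i := by
    intro i
    rw [hmul i]
    by_cases hpos : 0 < D.mulVec e i
    · have hle : t ≤ f i := Finset.inf'_le f (by simp [hT, hpos])
      have := (le_div_iff₀ hpos).mp (by simpa [hf] using hle)
      linarith
    · push_neg at hpos
      have := mul_nonpos_of_nonneg_of_nonpos ht0 hpos
      linarith [hv i]
  have hact : ∀ i, D.mulVec v i = b i → D.mulVec w i = b i := by
    intro i hi
    rw [hmul i, mem_polyK.mp he i hi]
    simp [hi]
  have hwact : D.mulVec w i₀ = b i₀ := by
    rw [hmul i₀, ht, hi₀, hf]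
    field_simp
    ring
  have hKle : polyK D b w ≤ polyK D b v := by
    intro d hd
    rw [mem_polyK] at hd ⊢
    exact fun i hi => hd i (hact i hi)
  have heKw : e ∉ polyK D b w := by
    intro hmem
    have := mem_polyK.mp hmem i₀ hwact
    exact absurd this (ne_of_gt hi₀pos)
  refine ⟨w, hfeas, lt_of_le_of_ne hKle (fun h => heKw (h ▸ he)), ?_⟩
  have : c ⬝ᵥ w = c ⬝ᵥ v + t * (c ⬝ᵥ e) := by
    simp [hw, dotProduct_add, dotProduct_smul, smul_eq_mul]
  rw [this]
  nlinarith

lemma poly_ker_bot {D : Matrix (Fin m) (Fin n) ℝ} (hrank : D.rank = n) :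
    LinearMap.ker D.mulVecLin = ⊥ := by
  have h := LinearMap.finrank_range_add_finrank_ker D.mulVecLin
  rw [show Module.finrank ℝ (Fin n → ℝ) = n by simp] at h
  have hr : Module.finrank ℝ (LinearMap.range D.mulVecLin) = n := hrank
  rw [hr] at h
  exact Submodule.finrank_eq_zero.mp (by omega)

lemma poly_to_extreme {D : Matrix (Fin m) (Fin n) ℝ} {b : Fin m → ℝ} {c : Fin n → ℝ}
    (hrank : D.rank = n)
    (hbdd : BddAbove ((fun v => c ⬝ᵥ v) '' {v | ∀ i, D.mulVec v i ≤ b i})) :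
    ∀ v, (∀ i, D.mulVec v i ≤ b i) →
      ∃ w, (∀ i, D.mulVec w i ≤ b i) ∧ polyK D b w = ⊥ ∧ c ⬝ᵥ v ≤ c ⬝ᵥ w := by
  suffices H : ∀ k v, (∀ i, D.mulVec v i ≤ b i) → finrank ℝ (polyK D b v) ≤ k →
      ∃ w, (∀ i, D.mulVec w i ≤ b i) ∧ polyK D b w = ⊥ ∧ c ⬝ᵥ v ≤ c ⬝ᵥ w by
    exact fun v hv => H _ v hv le_rfl
  intro k
  induction k with
  | zero =>
    intro v hv hk
    exact ⟨v, hv, Submodule.finrank_eq_zero.mp (Nat.le_zero.mp hk), le_rfl⟩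
  | succ k ih =>
    intro v hv hk
    by_cases hK : polyK D b v = ⊥
    · exact ⟨v, hv, hK, le_rfl⟩
    · obtain ⟨d, hdK, hd0⟩ := Submodule.exists_mem_ne_zero_of_ne_bot hK
      -- choose direction d' with 0 ≤ c ⬝ᵥ d'
      obtain ⟨d', hd'K, hd'0, hcd'⟩ :
          ∃ d', d' ∈ polyK D b v ∧ d' ≠ 0 ∧ 0 ≤ c ⬝ᵥ d' := by
        rcases le_total 0 (c ⬝ᵥ d) with h | h
        · exact ⟨d, hdK, hd0, h⟩
        · exact ⟨-d, neg_mem hdK, neg_ne_zero.mpr hd0,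
            by rw [dotProduct_neg]; linarith⟩
      have key : ∃ e, e ∈ polyK D b v ∧ (∃ i, 0 < D.mulVec e i) ∧ 0 ≤ c ⬝ᵥ e := by
        by_cases h2 : ∃ i, 0 < D.mulVec d' i
        · exact ⟨d', hd'K, h2, hcd'⟩
        · push_neg at h2
          -- the ray v + t • d' is feasible for all t ≥ 0
          have hray : ∀ t : ℝ, 0 ≤ t → ∀ i, D.mulVec (v + t • d') i ≤ b i := by
            intro t ht i
            have : D.mulVec (v + t • d') i = D.mulVec v i + t * D.mulVec d' i := by
              simp [Matrix.mulVec_add, Matrix.mulVec_smul]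
            rw [this]
            have := mul_nonpos_of_nonneg_of_nonpos ht (h2 i)
            linarith [hv i]
          rcases eq_or_lt_of_le hcd' with hzero | hpos
          · -- c ⬝ᵥ d' = 0 : use -d'
            refine ⟨-d', neg_mem hd'K, ?_, by rw [dotProduct_neg]; linarith⟩
            by_contra h3
            push_neg at h3
            have hall : ∀ i, D.mulVec d' i = 0 := by
              intro i
              have h4 := h3 i
              rw [Matrix.mulVec_neg] at h4
              have : -(D.mulVec d' i) ≤ 0 := h4
              linarith [h2 i]
            have : d' ∈ LinearMap.ker D.mulVecLin := by
              rw [LinearMap.mem_ker]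
              exact funext hall
            rw [poly_ker_bot hrank, Submodule.mem_bot] at this
            exact hd'0 this
          · -- c ⬝ᵥ d' > 0, contradiction with boundedness
            exfalso
            obtain ⟨M, hM⟩ := hbdd
            set t : ℝ := max 0 ((M - c ⬝ᵥ v + 1) / (c ⬝ᵥ d')) with htdef
            have ht0 : 0 ≤ t := le_max_left _ _
            have hmem : c ⬝ᵥ (v + t • d') ≤ M :=
              hM ⟨v + t • d', hray t ht0, rfl⟩
            have hobj : c ⬝ᵥ (v + t • d') = c ⬝ᵥ v + t * (c ⬝ᵥ d') := by
              simp [dotProduct_add, dotProduct_smul, smul_eq_mul]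
            have hge : (M - c ⬝ᵥ v + 1) / (c ⬝ᵥ d') ≤ t := le_max_right _ _
            have := (div_le_iff₀ hpos).mp hge
            rw [hobj] at hmem
            linarith
      obtain ⟨e, heK, hex, hce⟩ := key
      obtain ⟨w, hwfeas, hKlt, hle⟩ := poly_step hv heK hex hce
      have hfr : finrank ℝ (polyK D b w) ≤ k := by
        have := Submodule.finrank_lt_finrank_of_lt hKlt
        omega
      obtain ⟨w', hw'1, hw'2, hw'3⟩ := ih w hwfeas hfr
      exact ⟨w', hw'1, hw'2, le_trans hle hw'3⟩

/-- If `P = {v : D v ≤ b}` is nonempty, `rank D = n`, and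
`sup {cᵀv : v ∈ P}` is finite, then the supremum is attained at an extreme point of `P`
(a point of `P` that is not the midpoint of two distinct points of `P`). -/
theorem polyhedron_sup_attained_at_extreme_point (m n : ℕ)
    (D : Matrix (Fin m) (Fin n) ℝ) (b : Fin m → ℝ) (c : Fin n → ℝ)
    (hrank : D.rank = n)
    (P : Set (Fin n → ℝ)) (hP : P = {v | ∀ i, D.mulVec v i ≤ b i})
    (hne : P.Nonempty)
    (hbdd : BddAbove ((fun v => ∑ j, c j * v j) '' P)) :
    ∃ v ∈ P, (∀ x ∈ P, ∀ y ∈ P, v = (x + y) / 2 → x = y) ∧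
      (∑ j, c j * v j) = sSup ((fun v => ∑ j, c j * v j) '' P) := by
  classical
  subst hP
  have hobj : (fun v : Fin n → ℝ => ∑ j, c j * v j) = fun v => c ⬝ᵥ v := by
    funext v; simp [dotProduct]
  rw [hobj] at hbdd ⊢
  have hext := poly_to_extreme (b := b) hrank hbdd
  -- the set of "basic" feasible points
  set E : Set (Fin n → ℝ) :=
    {v | (∀ i, D.mulVec v i ≤ b i) ∧ polyK D b v = ⊥} with hE
  have hEfin : E.Finite := by
    have hinj : Set.InjOn (fun v => {i | D.mulVec v i = b i}) E := by
      intro v hv w hw hvw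
      have hsub : v - w ∈ polyK D b v := by
        rw [mem_polyK]
        intro i hi
        have hiw : D.mulVec w i = b i := by
          have h2 : ({i | D.mulVec v i = b i} : Set (Fin m)) =
              {i | D.mulVec w i = b i} := hvw
          exact (Set.ext_iff.mp h2 i).mp hi
        rw [Matrix.mulVec_sub]
        simp [Pi.sub_apply, hi, hiw]
      rw [hv.2, Submodule.mem_bot, sub_eq_zero] at hsub
      exact hsub
    exact Set.Finite.of_finite_image (Set.toFinite _) hinj
  obtain ⟨v₀, hv₀⟩ := hne
  obtain ⟨w₀, hw₀feas, hw₀K, _⟩ := hext v₀ hv₀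
  have hEne : E.Nonempty := ⟨w₀, hw₀feas, hw₀K⟩
  obtain ⟨v, hvE, hvmax⟩ :=
    Set.Finite.exists_maximalFor (fun v => c ⬝ᵥ v) E hEfin hEne
  have hvmax' : ∀ u ∈ E, c ⬝ᵥ u ≤ c ⬝ᵥ v := by
    intro u hu
    rcases le_total (c ⬝ᵥ u) (c ⬝ᵥ v) with h | h
    · exact h
    · exact hvmax hu h
  have hub : ∀ u, (∀ i, D.mulVec u i ≤ b i) → c ⬝ᵥ u ≤ c ⬝ᵥ v := by
    intro u hu
    obtain ⟨w, hw1, hw2, hw3⟩ := hext u hu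
    exact le_trans hw3 (hvmax' w ⟨hw1, hw2⟩)
  refine ⟨v, hvE.1, ?_, ?_⟩
  · -- extreme point
    intro x hx y hy hmid
    have hsub : x - y ∈ polyK D b v := by
      rw [mem_polyK]
      intro i hi
      have hhalf : v = (2⁻¹ : ℝ) • (x + y) := by
        rw [hmid]; funext j
        simp [Pi.div_apply, div_eq_inv_mul]
      have hvi : D.mulVec v i = (D.mulVec x i + D.mulVec y i) / 2 := by
        rw [hhalf, Matrix.mulVec_smul, Matrix.mulVec_add]
        simp [Pi.smul_apply, Pi.add_apply]
        ring
      have hxle := hx i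
      have hyle := hy i
      rw [hvi] at hi
      have hxe : D.mulVec x i = b i := by linarith
      have hye : D.mulVec y i = b i := by linarith
      rw [Matrix.mulVec_sub]
      simp [Pi.sub_apply, hxe, hye]
    rw [hvE.2, Submodule.mem_bot, sub_eq_zero] at hsub
    exact hsub
  · -- supremum attained
    refine le_antisymm ?_ ?_
    · exact le_csSup hbdd ⟨v, hvE.1, rfl⟩
    · refine csSup_le ⟨_, ⟨v₀, hv₀, rfl⟩⟩ ?_
      rintro r ⟨u, hu, rfl⟩
      exact hub u hu
end

section
/- Let A be a real m×n matrix, c ∈ ℝⁿ, FC(A) = {v ∈ ℝⁿ : A v = 0, v ≥ 0 componentwise}, and FP(A) = {e ∈ FC(A) : Σ_{j=1}^n e_j ≤ 1}. Suppose e* is an extreme point of FP(A) (a point of FP(A) not expressible as the midpoint of two distinct points of FP(A)) that minimizes cᵀe over FP(A), and suppose cᵀe* < 0. Then e* ≠ 0 and e* spans an extreme ray of FC(A): whenever e* = x + y with x ∈ FC(A) and y ∈ FC(A), both x and y are nonnegative scalar multiples of e*. -/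
private lemma aux_half (m n : ℕ) (A : Matrix (Fin m) (Fin n) ℝ)
    (e x y : Fin n → ℝ)
    (hext : ∀ p, (A.mulVec p = 0 ∧ (∀ j, 0 ≤ p j) ∧ ∑ j, p j ≤ 1) →
      ∀ q, (A.mulVec q = 0 ∧ (∀ j, 0 ≤ q j) ∧ ∑ j, q j ≤ 1) → e = (p + q) / 2 → p = q)
    (hse : ∑ j, e j = 1)
    (hxA : A.mulVec x = 0) (hxpos : ∀ j, 0 ≤ x j)
    (hyA : A.mulVec y = 0) (hypos : ∀ j, 0 ≤ y j)
    (hexy : e = x + y)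
    (hhalf : ∑ j, x j ≤ 1/2) :
    x = (∑ j, x j) • e := by
  set σ : ℝ := ∑ j, x j with hσ
  have hσ0 : 0 ≤ σ := Finset.sum_nonneg fun j _ => hxpos j
  have hsy : ∑ j, y j = 1 - σ := by
    have : ∑ j, e j = ∑ j, x j + ∑ j, y j := by
      rw [hexy]; simp [Finset.sum_add_distrib]
    rw [hse] at this; linarith
  have h1σ : (0:ℝ) < 1 - σ := by linarith
  have hcoef : 0 ≤ (1 - 2*σ)/(1-σ) := div_nonneg (by linarith) h1σ.le
  set p : Fin n → ℝ := (2:ℝ) • x + ((1 - 2*σ)/(1-σ)) • y with hp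
  set q : Fin n → ℝ := ((1:ℝ)/(1-σ)) • y with hq
  have hpmem : A.mulVec p = 0 ∧ (∀ j, 0 ≤ p j) ∧ ∑ j, p j ≤ 1 := by
    refine ⟨?_, ?_, ?_⟩
    · rw [hp]; simp [Matrix.mulVec_add, Matrix.mulVec_smul, hxA, hyA]
    · intro j
      have := hxpos j; have := hypos j
      have : 0 ≤ ((1 - 2*σ)/(1-σ)) * y j := mul_nonneg hcoef (hypos j)
      simp only [hp, Pi.add_apply, Pi.smul_apply, smul_eq_mul]
      nlinarith [hxpos j]
    · have : ∑ j, p j = 2*σ + ((1 - 2*σ)/(1-σ)) * (1-σ) := by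
        simp only [hp, Pi.add_apply, Pi.smul_apply, smul_eq_mul,
          Finset.sum_add_distrib, ← Finset.mul_sum, hsy, ← hσ]
      rw [this, div_mul_cancel₀ _ h1σ.ne']
      linarith
  have hqmem : A.mulVec q = 0 ∧ (∀ j, 0 ≤ q j) ∧ ∑ j, q j ≤ 1 := by
    refine ⟨?_, ?_, ?_⟩
    · rw [hq]; simp [Matrix.mulVec_smul, hyA]
    · intro j
      simp only [hq, Pi.smul_apply, smul_eq_mul]
      exact mul_nonneg (by positivity) (hypos j)
    · have : ∑ j, q j = (1/(1-σ)) * (1-σ) := by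
        simp only [hq, Pi.smul_apply, smul_eq_mul, ← Finset.mul_sum, hsy]
      rw [this, one_div_mul_cancel h1σ.ne']
  have hmid : e = (p + q) / 2 := by
    funext j
    have hej : e j = x j + y j := by rw [hexy]; simp
    simp only [Pi.div_apply, Pi.add_apply, hp, hq, Pi.smul_apply, smul_eq_mul, Pi.ofNat_apply]
    rw [hej]
    field_simp
    ring
  have hpq := hext p hpmem q hqmem hmid
  funext j
  have hpqj : (2:ℝ) * x j + ((1 - 2*σ)/(1-σ)) * y j = (1/(1-σ)) * y j := by
    have := congrFun hpq j
    simpa [hp, hq] using this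
  have hej : e j = x j + y j := by rw [hexy]; simp
  have hkey : x j * (1 - σ) = σ * y j := by
    have h := hpqj
    field_simp at h
    nlinarith [h]
  simp only [Pi.smul_apply, smul_eq_mul, hej]
  nlinarith [hkey]

/-- Let `FC(A) = {v : A v = 0, v ≥ 0}` and
`FP(A) = {e ∈ FC(A) : ∑ e_j ≤ 1}`. If `e*` is an extreme point of `FP(A)` minimizing
`cᵀe` over `FP(A)` with `cᵀe* < 0`, then `e* ≠ 0` and `e*` spans an extreme ray of
`FC(A)`: whenever `e* = x + y` with `x, y ∈ FC(A)`, both `x` and `y` are nonnegative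
multiples of `e*`. -/
theorem optimal_extreme_point_spans_extreme_ray (m n : ℕ)
    (A : Matrix (Fin m) (Fin n) ℝ) (c : Fin n → ℝ)
    (FC FP : Set (Fin n → ℝ))
    (hFC : FC = {v | A.mulVec v = 0 ∧ ∀ j, 0 ≤ v j})
    (hFP : FP = {e | e ∈ FC ∧ ∑ j, e j ≤ 1})
    (e : Fin n → ℝ) (heFP : e ∈ FP)
    (hext : ∀ x ∈ FP, ∀ y ∈ FP, e = (x + y) / 2 → x = y)
    (hmin : ∀ e' ∈ FP, ∑ j, c j * e j ≤ ∑ j, c j * e' j)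
    (hneg : ∑ j, c j * e j < 0) :
    e ≠ 0 ∧ ∀ x ∈ FC, ∀ y ∈ FC, e = x + y →
      (∃ a : ℝ, 0 ≤ a ∧ x = a • e) ∧ (∃ b : ℝ, 0 ≤ b ∧ y = b • e) := by
  subst hFC hFP
  obtain ⟨⟨heA, hepos⟩, hesum⟩ := heFP
  have hene : e ≠ 0 := by
    intro h; rw [h] at hneg; simp at hneg
  -- show ∑ e = 1
  have hs0 : 0 < ∑ j, e j := by
    rcases (Finset.sum_nonneg fun j _ => hepos j).lt_or_eq with h | h
    · exact h
    · exfalso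
      have : e = 0 := by
        funext j
        have hle : e j ≤ ∑ k, e k :=
          Finset.single_le_sum (fun k _ => hepos k) (Finset.mem_univ j)
        have := hepos j
        simp only [Pi.zero_apply]
        linarith
      exact hene this
  set s : ℝ := ∑ j, e j with hsdef
  have hs1 : s = 1 := by
    by_contra hcon
    have hslt : s < 1 := lt_of_le_of_ne hesum hcon
    set e' : Fin n → ℝ := (1/s) • e with he'
    have he'mem : e' ∈ {v | A.mulVec v = 0 ∧ ∀ j, 0 ≤ v j} ∩ {e | ∑ j, e j ≤ 1} := by
      constructor
      · constructor
        · rw [he']; simp [Matrix.mulVec_smul, heA]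
        · intro j
          simp only [he', Pi.smul_apply, smul_eq_mul]
          exact mul_nonneg (by positivity) (hepos j)
      · have : ∑ j, e' j = (1/s) * s := by
          simp only [he', Pi.smul_apply, smul_eq_mul, ← Finset.mul_sum, ← hsdef]
        rw [Set.mem_setOf_eq, this, one_div_mul_cancel hs0.ne']
    have hce' : ∑ j, c j * e' j = (1/s) * ∑ j, c j * e j := by
      simp only [he', Pi.smul_apply, smul_eq_mul, Finset.mul_sum]
      congr 1; funext j; ring
    have := hmin e' ⟨he'mem.1, he'mem.2⟩
    rw [hce'] at this
    have h1s : 1 < 1/s := by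
      rw [lt_div_iff₀ hs0]; linarith
    nlinarith [hneg, this, h1s]
  -- ray part
  refine ⟨hene, ?_⟩
  intro x hx y hy hexy
  obtain ⟨hxA, hxpos⟩ := hx
  obtain ⟨hyA, hypos⟩ := hy
  have hext' : ∀ p, (A.mulVec p = 0 ∧ (∀ j, 0 ≤ p j) ∧ ∑ j, p j ≤ 1) →
      ∀ q, (A.mulVec q = 0 ∧ (∀ j, 0 ≤ q j) ∧ ∑ j, q j ≤ 1) → e = (p + q) / 2 → p = q := by
    intro p hp q hq hm
    exact hext p ⟨⟨hp.1, hp.2.1⟩, hp.2.2⟩ q ⟨⟨hq.1, hq.2.1⟩, hq.2.2⟩ hm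
  have hsumxy : (∑ j, x j) + (∑ j, y j) = 1 := by
    have : ∑ j, e j = ∑ j, x j + ∑ j, y j := by
      rw [hexy]; simp [Finset.sum_add_distrib]
    rw [← hsdef, hs1] at this; linarith
  have hσ0 : 0 ≤ ∑ j, x j := Finset.sum_nonneg fun j _ => hxpos j
  have hτ0 : 0 ≤ ∑ j, y j := Finset.sum_nonneg fun j _ => hypos j
  by_cases hc : ∑ j, x j ≤ 1/2
  · have hxe := aux_half m n A e x y hext' hs1 hxA hxpos hyA hypos hexy hc
    refine ⟨⟨∑ j, x j, hσ0, hxe⟩, ⟨∑ j, y j, hτ0, ?_⟩⟩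
    funext j
    have := congrFun hxe j
    have hej : e j = x j + y j := by rw [hexy]; simp
    simp only [Pi.smul_apply, smul_eq_mul] at this ⊢
    have hmul : (∑ j, x j) * e j + (∑ j, y j) * e j = e j := by
      rw [← add_mul, hsumxy, one_mul]
    linarith
  · push_neg at hc
    have hc' : ∑ j, y j ≤ 1/2 := by linarith
    have hye := aux_half m n A e y x hext' hs1 hyA hypos hxA hxpos
      (by rw [hexy]; abel) hc'
    refine ⟨⟨∑ j, x j, hσ0, ?_⟩, ⟨∑ j, y j, hτ0, hye⟩⟩
    funext j
    have := congrFun hye j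
    have hej : e j = x j + y j := by rw [hexy]; simp
    simp only [Pi.smul_apply, smul_eq_mul] at this ⊢
    have hmul : (∑ j, x j) * e j + (∑ j, y j) * e j = e j := by
      rw [← add_mul, hsumxy, one_mul]
    linarith
end

section
/- Let A be a real m×n matrix and FC(A) = {v ∈ ℝⁿ : A v = 0, v ≥ 0 componentwise}. For a nonzero e ∈ FC(A), the following are equivalent: (i) e is support-minimal in FC(A), i.e., there is no nonzero v ∈ FC(A) whose support {j : v_j ≠ 0} is a proper subset of the support {j : e_j ≠ 0} of e; (ii) e spans an extreme ray of FC(A), i.e., whenever e = x + y with x, y ∈ FC(A), both x and y are nonnegative scalar multiples of e. -/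
/-- Lemma 1 of the paper, Gagneur–Klamt: For a nonzero `e` in the flux
cone `FC(A) = {v : A v = 0, v ≥ 0}`, `e` is support-minimal (an elementary flux mode)
iff `e` spans an extreme ray of `FC(A)`. -/
theorem efm_iff_extreme_ray (m n : ℕ)
    (A : Matrix (Fin m) (Fin n) ℝ)
    (FC : Set (Fin n → ℝ))
    (hFC : FC = {v | A.mulVec v = 0 ∧ ∀ j, 0 ≤ v j})
    (e : Fin n → ℝ) (heFC : e ∈ FC) (he0 : e ≠ 0) :
    (¬ ∃ v ∈ FC, v ≠ 0 ∧ {j | v j ≠ 0} ⊂ {j | e j ≠ 0}) ↔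
      (∀ x ∈ FC, ∀ y ∈ FC, e = x + y →
        (∃ a : ℝ, 0 ≤ a ∧ x = a • e) ∧ (∃ b : ℝ, 0 ≤ b ∧ y = b • e)) := by
  subst hFC
  obtain ⟨heA, hepos⟩ := heFC
  constructor
  · intro hmin x hx y hy hxy
    obtain ⟨hxA, hxpos⟩ := hx
    obtain ⟨hyA, hypos⟩ := hy
    -- e j = 0 → x j = 0 and y j = 0
    have hzero : ∀ j, e j = 0 → x j = 0 ∧ y j = 0 := by
      intro j hj
      have hsj : e j = x j + y j := by rw [hxy]; simp
      constructor
      · nlinarith [hxpos j, hypos j]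
      · nlinarith [hxpos j, hypos j]
    -- the support of e as a finset
    have hS : (Finset.univ.filter (fun j => e j ≠ 0)).Nonempty := by
      by_contra h
      apply he0
      funext j
      by_contra hj
      exact h ⟨j, Finset.mem_filter.mpr ⟨Finset.mem_univ j, hj⟩⟩
    obtain ⟨j0, hj0mem, hj0min⟩ :=
      Finset.exists_min_image _ (fun j => x j / e j) hS
    have hej0 : e j0 ≠ 0 := (Finset.mem_filter.mp hj0mem).2
    have hej0pos : 0 < e j0 := lt_of_le_of_ne (hepos j0) (Ne.symm hej0)
    set a := x j0 / e j0 with ha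
    have ha0 : 0 ≤ a := div_nonneg (hxpos j0) (hepos j0)
    -- w = x - a • e
    set w : Fin n → ℝ := fun j => x j - a * e j with hw
    have hwpos : ∀ j, 0 ≤ w j := by
      intro j
      by_cases hje : e j = 0
      · simp [hw, hje, (hzero j hje).1]
      · have hejpos : 0 < e j := lt_of_le_of_ne (hepos j) (Ne.symm hje)
        have := hj0min j (Finset.mem_filter.mpr ⟨Finset.mem_univ j, hje⟩)
        have : a * e j ≤ x j := by
          rw [ha]
          calc x j0 / e j0 * e j ≤ x j / e j * e j := by
                exact mul_le_mul_of_nonneg_right this (le_of_lt hejpos)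
            _ = x j := by field_simp
        simpa [hw] using sub_nonneg.mpr this
    have hwA : A.mulVec w = 0 := by
      have : w = x - a • e := by funext j; simp [hw, mul_comm]
      rw [this, Matrix.mulVec_sub, Matrix.mulVec_smul, hxA, heA, smul_zero, sub_zero]
    have hwj0 : w j0 = 0 := by
      simp [hw, ha]
      field_simp
      ring
    have hwsupp : {j | w j ≠ 0} ⊆ {j | e j ≠ 0} := by
      intro j hj
      simp only [Set.mem_setOf_eq] at hj ⊢
      intro hje
      exact hj (by simp [hw, hje, (hzero j hje).1])
    have hw0 : w = 0 := by
      by_contra hwne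
      apply hmin
      refine ⟨w, ⟨hwA, hwpos⟩, hwne, hwsupp, ?_⟩
      intro hsub
      have : w j0 ≠ 0 := hsub hej0
      exact this hwj0
    have hxa : x = a • e := by
      funext j
      have := congrFun hw0 j
      simp [hw] at this
      simp [Pi.smul_apply, smul_eq_mul]
      linarith
    refine ⟨⟨a, ha0, hxa⟩, ⟨1 - a, ?_, ?_⟩⟩
    · -- y j0 = (1-a) e j0 ≥ 0 with e j0 > 0
      have hyj0 : y j0 = (1 - a) * e j0 := by
        have hsj : e j0 = x j0 + y j0 := by rw [hxy]; simp
        have hxj0 : x j0 = a * e j0 := by rw [hxa]; simp [smul_eq_mul]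
        linarith
      nlinarith [hypos j0]
    · funext j
      have hsj : e j = x j + y j := by rw [hxy]; simp
      have hxj : x j = a * e j := by rw [hxa]; simp [smul_eq_mul]
      simp [Pi.smul_apply, smul_eq_mul]
      linarith
  · intro hext
    rintro ⟨v, ⟨hvA, hvpos⟩, hv0, hvsub, hvne⟩
    -- support of v nonempty
    have hT : (Finset.univ.filter (fun j => v j ≠ 0)).Nonempty := by
      by_contra h
      apply hv0
      funext j
      by_contra hj
      exact h ⟨j, Finset.mem_filter.mpr ⟨Finset.mem_univ j, hj⟩⟩
    obtain ⟨j0, hj0mem, hj0min⟩ :=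
      Finset.exists_min_image _ (fun j => e j / v j) hT
    have hvj0 : v j0 ≠ 0 := (Finset.mem_filter.mp hj0mem).2
    have hvj0pos : 0 < v j0 := lt_of_le_of_ne (hvpos j0) (Ne.symm hvj0)
    have hej0 : e j0 ≠ 0 := hvsub hvj0
    have hej0pos : 0 < e j0 := lt_of_le_of_ne (hepos j0) (Ne.symm hej0)
    set t := e j0 / v j0 with ht
    have ht0 : 0 < t := div_pos hej0pos hvj0pos
    set x : Fin n → ℝ := fun j => t * v j with hxdef
    set y : Fin n → ℝ := fun j => e j - t * v j with hydef
    have hxFC : x ∈ {v | A.mulVec v = 0 ∧ ∀ j, 0 ≤ v j} := by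
      constructor
      · have : x = t • v := by funext j; simp [hxdef, smul_eq_mul]
        rw [this, Matrix.mulVec_smul, hvA, smul_zero]
      · intro j; exact mul_nonneg (le_of_lt ht0) (hvpos j)
    have hyFC : y ∈ {v | A.mulVec v = 0 ∧ ∀ j, 0 ≤ v j} := by
      constructor
      · have : y = e - t • v := by funext j; simp [hydef, smul_eq_mul]
        rw [this, Matrix.mulVec_sub, Matrix.mulVec_smul, hvA, heA, smul_zero, sub_zero]
      · intro j
        by_cases hjv : v j = 0
        · simp [hydef, hjv, hepos j]
        · have hvjpos : 0 < v j := lt_of_le_of_ne (hvpos j) (Ne.symm hjv)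
          have := hj0min j (Finset.mem_filter.mpr ⟨Finset.mem_univ j, hjv⟩)
          have : t * v j ≤ e j := by
            rw [ht]
            calc e j0 / v j0 * v j ≤ e j / v j * v j :=
                  mul_le_mul_of_nonneg_right this (le_of_lt hvjpos)
              _ = e j := by field_simp
          simp [hydef]; linarith
    have hsum : e = x + y := by funext j; simp [hxdef, hydef]
    obtain ⟨⟨a, ha0, hxa⟩, _⟩ := hext x hxFC y hyFC hsum
    -- x ≠ 0 since x j0 = e j0 ≠ 0
    have hxj0 : x j0 = e j0 := by
      simp [hxdef, ht]; field_simp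
    -- proper subset: exists j with e j ≠ 0, v j = 0
    obtain ⟨j1, hj1⟩ : ∃ j, e j ≠ 0 ∧ v j = 0 := by
      by_contra h
      push_neg at h
      apply hvne
      intro j hj
      simp only [Set.mem_setOf_eq] at hj ⊢
      exact h j hj
    have hxj1 : x j1 = a * e j1 := by rw [hxa]; simp [smul_eq_mul]
    have hxj1' : x j1 = 0 := by simp [hxdef, hj1.2]
    have ha00 : a = 0 := by
      rcases mul_eq_zero.mp (hxj1' ▸ hxj1.symm) with h | h
      · exact h
      · exact absurd h hj1.1
    have : x j0 = 0 := by rw [hxa, ha00]; simp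
    rw [hxj0] at this
    exact hej0 this
end
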